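/- Let (ν, P, P̃, U) ∈ K_d, let θ̃ be a nonzero complex number, R = θ̃ P̃ Uᵗ, φ̃_j = R φ_j R^{-1} and ẽ_{k,l} = R e_{k,l} R^{-1}. Then for every i = 1, 2, ..., d one has the matrix identity φ_i = ν ∑_{0 ≤ k ≠ l ≤ d} p̃_i p_k u_{k,i} u_{l,i} ẽ_{k,l} + ∑_{j=1}^{d} p̃_i (ν p_j u_{j,i}² − 1) φ̃_j. -/

import Mathlib

open Matrix Finset

theorem stmt_3 (d : ℕ) (hd : 1 ≤ d) (ν : ℂ) (hν : ν ≠ 0)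
    (p pt : Fin (d+1) → ℂ) (U : Matrix (Fin (d+1)) (Fin (d+1)) ℂ)
    (hp0 : p 0 = 1/ν) (hpt0 : pt 0 = 1/ν)
    (hU : ∀ j, U 0 j = 1 ∧ U j 0 = 1)
    (hK : ν • (Matrix.diagonal p * U * Matrix.diagonal pt * U.transpose) = 1)
    (θt : ℂ) (hθt : θt ≠ 0) (R : Matrix (Fin (d+1)) (Fin (d+1)) ℂ)
    (hR : R = θt • (Matrix.diagonal pt * U.transpose))
    (e : Fin (d+1) → Fin (d+1) → Matrix (Fin (d+1)) (Fin (d+1)) ℂ)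
    (he : ∀ i j, e i j = Matrix.single i j 1)
    (φ : Fin (d+1) → Matrix (Fin (d+1)) (Fin (d+1)) ℂ)
    (hφ : ∀ i, φ i = e i i - (((d : ℂ) + 1)⁻¹) • 1)
    (φt : Fin (d+1) → Matrix (Fin (d+1)) (Fin (d+1)) ℂ)
    (hφt : ∀ i, φt i = R * φ i * R⁻¹)
    (et : Fin (d+1) → Fin (d+1) → Matrix (Fin (d+1)) (Fin (d+1)) ℂ)
    (het : ∀ i j, et i j = R * e i j * R⁻¹) :
    ∀ i : Fin (d+1), i ≠ 0 →
      φ i = ν • (∑ k : Fin (d+1), ∑ l ∈ Finset.univ.erase k,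
          (pt i * p k * U k i * U l i) • et k l)
        + ∑ j ∈ Finset.univ.erase (0 : Fin (d+1)),
            (pt i * (ν * p j * (U j i)^2 - 1)) • φt j := by
  intro i _
  have hd1 : ((d : ℂ) + 1) ≠ 0 := Nat.cast_add_one_ne_zero d
  set c : ℂ := ((d : ℂ) + 1)⁻¹ with hc
  set A : Matrix (Fin (d+1)) (Fin (d+1)) ℂ := Matrix.diagonal pt * U.transpose with hA
  set B : Matrix (Fin (d+1)) (Fin (d+1)) ℂ := ν • (Matrix.diagonal p * U) with hB
  have hBA : B * A = 1 := by
    rw [hB, hA, Matrix.smul_mul, ← Matrix.mul_assoc]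
    exact hK
  have hAB : A * B = 1 := mul_eq_one_comm.mp hBA
  have key : ∀ a b : Fin (d+1),
      (∑ k, (pt a * U k a) * (ν * (p k * U k b))) = if a = b then (1:ℂ) else 0 := by
    intro a b
    have h := congrFun (congrFun hAB a) b
    rw [Matrix.mul_apply, Matrix.one_apply] at h
    rw [← h]
    refine Finset.sum_congr rfl fun k _ => ?_
    rw [hA, hB, Matrix.diagonal_mul, Matrix.transpose_apply, Matrix.smul_apply,
      Matrix.diagonal_mul, smul_eq_mul]
  have hRB : R * (θt⁻¹ • B) = 1 := by
    rw [hR, Matrix.smul_mul, Matrix.mul_smul, smul_smul,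
      mul_inv_cancel₀ hθt, one_smul, hAB]
  have hRinv : R⁻¹ = θt⁻¹ • B := Matrix.inv_eq_right_inv hRB
  have hRR : R * R⁻¹ = 1 := by rw [hRinv]; exact hRB
  have het' : ∀ k l, et k l = A * e k l * B := by
    intro k l
    rw [het, hRinv, hR, Matrix.smul_mul, Matrix.smul_mul, Matrix.mul_smul,
      smul_smul, mul_inv_cancel₀ hθt, one_smul]
  have hφt' : ∀ j, φt j = A * e j j * B - c • 1 := by
    intro j
    rw [hφt, hφ, Matrix.mul_sub, Matrix.sub_mul, Matrix.mul_smul, Matrix.smul_mul,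
      mul_one, hRR, ← het, het']
  have hAeB : ∀ (k l a b : Fin (d+1)),
      (A * e k l * B) a b = (pt a * U k a) * (ν * (p l * U l b)) := by
    intro k l a b
    rw [he, hA, hB, Matrix.mul_apply]
    rw [Finset.sum_eq_single l (fun y _ hy => by
      rw [Matrix.mul_single_apply_of_ne 1 k l a y hy, zero_mul])
      (fun h => absurd (Finset.mem_univ l) h)]
    rw [Matrix.mul_single_apply_same, mul_one, Matrix.diagonal_mul,
      Matrix.transpose_apply, Matrix.smul_apply, Matrix.diagonal_mul, smul_eq_mul]
  rw [hφ, he]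
  ext a b
  simp only [het', hφt', hAeB, Matrix.add_apply, Matrix.sub_apply, Matrix.smul_apply,
    Matrix.sum_apply, Matrix.one_apply, Matrix.single, Matrix.of_apply,
    smul_eq_mul]
  have hf := key a i
  have hg := key i b
  have hm := key a b
  have hq := key i i
  rw [if_pos rfl] at hq
  have e1 : ν * (∑ k, ∑ l ∈ Finset.univ.erase k,
        pt i * p k * U k i * U l i * (pt a * U k a * (ν * (p l * U l b))))
      = (∑ k, (pt a * U k a) * (ν * (p k * U k i)))
          * (∑ l, (pt i * U l i) * (ν * (p l * U l b)))
        - ∑ k, ((pt a * U k a) * (ν * (p k * U k i)))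
            * ((pt i * U k i) * (ν * (p k * U k b))) := by
    rw [Finset.mul_sum, Finset.sum_mul_sum, ← Finset.sum_sub_distrib]
    refine Finset.sum_congr rfl fun k _ => ?_
    rw [Finset.sum_erase_eq_sub (Finset.mem_univ k), mul_sub, Finset.mul_sum]
    congr 1
    · exact Finset.sum_congr rfl fun l _ => by ring
    · ring
  have e2 : (∑ j ∈ Finset.univ.erase (0 : Fin (d+1)),
        pt i * (ν * p j * U j i ^ 2 - 1) * (pt a * U j a * (ν * (p j * U j b)) - c * (if a = b then (1:ℂ) else 0)))
      = (∑ j, pt i * (ν * p j * U j i ^ 2 - 1) * (pt a * U j a * (ν * (p j * U j b)) - c * (if a = b then (1:ℂ) else 0)))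
        - pt i * (ν * p 0 * U 0 i ^ 2 - 1) * (pt a * U 0 a * (ν * (p 0 * U 0 b)) - c * (if a = b then (1:ℂ) else 0)) :=
    Finset.sum_erase_eq_sub (Finset.mem_univ 0)
  have e3 : (∑ j, pt i * (ν * p j * U j i ^ 2 - 1) * (pt a * U j a * (ν * (p j * U j b)) - c * (if a = b then (1:ℂ) else 0)))
      = (∑ j, ((pt a * U j a) * (ν * (p j * U j i)))
            * ((pt i * U j i) * (ν * (p j * U j b))))
        - pt i * (∑ j, (pt a * U j a) * (ν * (p j * U j b)))
        - c * (if a = b then (1:ℂ) else 0) * (∑ j, (pt i * U j i) * (ν * (p j * U j i)))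
        + c * (if a = b then (1:ℂ) else 0) * pt i * ((d : ℂ) + 1) := by
    rw [Finset.mul_sum, Finset.mul_sum, ← Finset.sum_sub_distrib, ← Finset.sum_sub_distrib]
    have hcard : (∑ _j : Fin (d+1), c * (if a = b then (1:ℂ) else 0) * pt i)
        = c * (if a = b then (1:ℂ) else 0) * pt i * ((d : ℂ) + 1) := by
      rw [Finset.sum_const, Finset.card_univ, Fintype.card_fin, nsmul_eq_mul]
      push_cast; ring
    rw [← hcard, ← Finset.sum_add_distrib]
    exact Finset.sum_congr rfl fun j _ => by ring
  have hU0i : U 0 i = 1 := (hU i).1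
  have hU0a : U 0 a = 1 := (hU a).1
  have hU0b : U 0 b = 1 := (hU b).1
  have hνp0 : ν * p 0 = 1 := by rw [hp0]; field_simp
  have hcd : ((d : ℂ) + 1)⁻¹ * ((d : ℂ) + 1) = 1 := inv_mul_cancel₀ hd1
  have hd1' : (1 + (d : ℂ)) ≠ 0 := by rw [add_comm]; exact hd1
  have hcd2 : (1 + (d : ℂ))⁻¹ * (1 + (d : ℂ)) = 1 := inv_mul_cancel₀ hd1'
  have h0 : pt i * (ν * p 0 * U 0 i ^ 2 - 1) * (pt a * U 0 a * (ν * (p 0 * U 0 b)) - c * (if a = b then (1:ℂ) else 0)) = 0 := by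
    rw [hU0i]
    have h00 : ν * p 0 * (1:ℂ) ^ 2 - 1 = 0 := by rw [one_pow, mul_one, hνp0]; ring
    rw [h00]; ring
  rw [e1, e2, e3, hf, hg, hm, hq, h0, sub_zero, hc]
  by_cases hab : a = b
  · subst hab
    by_cases hia : i = a
    · subst hia
      simp only [eq_self_iff_true, and_self, if_true]
      first
        | ring1
        | linear_combination pt i * hcd
        | linear_combination (-(pt i)) * hcd
        | linear_combination (2 * pt i) * hcd
        | linear_combination (-(2 * pt i)) * hcd
        | linear_combination pt i * hcd2
        | linear_combination (-(pt i)) * hcd2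
        | linear_combination (2 * pt i) * hcd2
        | linear_combination (-(2 * pt i)) * hcd2
    · have hai : ¬ a = i := fun h => hia h.symm
      simp only [hia, hai, eq_self_iff_true, and_self, if_true, if_false]
      first
        | ring1
        | linear_combination pt i * hcd
        | linear_combination (-(pt i)) * hcd
        | linear_combination (2 * pt i) * hcd
        | linear_combination (-(2 * pt i)) * hcd
        | linear_combination pt i * hcd2
        | linear_combination (-(pt i)) * hcd2
        | linear_combination (2 * pt i) * hcd2
        | linear_combination (-(2 * pt i)) * hcd2
  · by_cases hia : i = a
    · subst hia
      simp only [hab, eq_self_iff_true, true_and, and_self, if_true, if_false]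
      first
        | ring1
        | linear_combination pt i * hcd
        | linear_combination (-(pt i)) * hcd
        | linear_combination (2 * pt i) * hcd
        | linear_combination (-(2 * pt i)) * hcd
        | linear_combination pt i * hcd2
        | linear_combination (-(pt i)) * hcd2
        | linear_combination (2 * pt i) * hcd2
        | linear_combination (-(2 * pt i)) * hcd2
    · have hai : ¬ a = i := fun h => hia h.symm
      by_cases hib : i = b
      · subst hib
        simp only [hia, hai, eq_self_iff_true, and_true, and_self, if_true, if_false]
        first
          | ring1
          | linear_combination pt i * hcd
          | linear_combination (-(pt i)) * hcd
          | linear_combination (2 * pt i) * hcd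
          | linear_combination (-(2 * pt i)) * hcd
          | linear_combination pt i * hcd2
          | linear_combination (-(pt i)) * hcd2
          | linear_combination (2 * pt i) * hcd2
          | linear_combination (-(2 * pt i)) * hcd2
      · simp only [hia, hai, hib, hab, false_and, if_false]
        first
          | ring1
          | linear_combination pt i * hcd
          | linear_combination (-(pt i)) * hcd
          | linear_combination (2 * pt i) * hcd
          | linear_combination (-(2 * pt i)) * hcd
          | linear_combination pt i * hcd2
          | linear_combination (-(pt i)) * hcd2
          | linear_combination (2 * pt i) * hcd2
          | linear_combination (-(2 * pt i)) * hcd2
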